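/- If f ∈ ℂ[h] with deg f > 1, then the algebra H(f) is neither left nor right Noetherian. -/

import Mathlib

open Polynomial MulOpposite

noncomputable section

/-- Defining relations of the generalized Heisenberg algebra H(f):
generators x (index 0), y (index 1), h (index 2) with
h*x = x*f(h), y*h = f(h)*y, y*x = x*y + (f(h) - h). -/
inductive HeisRel (f : ℂ[X]) : FreeAlgebra ℂ (Fin 3) → FreeAlgebra ℂ (Fin 3) → Prop
  | hx : HeisRel f (FreeAlgebra.ι ℂ 2 * FreeAlgebra.ι ℂ 0)
      (FreeAlgebra.ι ℂ 0 * aeval (FreeAlgebra.ι ℂ 2) f)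
  | yh : HeisRel f (FreeAlgebra.ι ℂ 1 * FreeAlgebra.ι ℂ 2)
      (aeval (FreeAlgebra.ι ℂ 2) f * FreeAlgebra.ι ℂ 1)
  | yx : HeisRel f (FreeAlgebra.ι ℂ 1 * FreeAlgebra.ι ℂ 0)
      (FreeAlgebra.ι ℂ 0 * FreeAlgebra.ι ℂ 1 + (aeval (FreeAlgebra.ι ℂ 2) f - FreeAlgebra.ι ℂ 2))

/-- The generalized Heisenberg algebra H(f). -/
abbrev GHA (f : ℂ[X]) := RingQuot (HeisRel f)

def ghaX (f : ℂ[X]) : GHA f := RingQuot.mkAlgHom ℂ (HeisRel f) (FreeAlgebra.ι ℂ 0)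
def ghaY (f : ℂ[X]) : GHA f := RingQuot.mkAlgHom ℂ (HeisRel f) (FreeAlgebra.ι ℂ 1)
def ghaH (f : ℂ[X]) : GHA f := RingQuot.mkAlgHom ℂ (HeisRel f) (FreeAlgebra.ι ℂ 2)

/-- k-th compositional power of σ applied to h, as a polynomial: σ^k(h). -/
def sigmaIter (f : ℂ[X]) : ℕ → ℂ[X]
  | 0 => X
  | k + 1 => (sigmaIter f k).comp f

namespace GhaNN

variable (f : ℂ[X])

lemma eval_sigmaIter (n : ℕ) (z : ℂ) : (sigmaIter f n).eval z = f.eval^[n] z := by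
  induction n generalizing z with
  | zero => simp [sigmaIter]
  | succ k ih => simp [sigmaIter, eval_comp, ih, Function.iterate_succ_apply]

lemma natDegree_sigmaIter (n : ℕ) : (sigmaIter f n).natDegree = f.natDegree ^ n := by
  induction n with
  | zero => simp [sigmaIter]
  | succ k ih => simp [sigmaIter, natDegree_comp, ih, pow_succ]

section Dyn

variable (hf : 1 < f.natDegree)

/-- critical values -/
def CV : Set ℂ := f.eval '' {z | f.derivative.IsRoot z}

/-- periodic points -/
def Per : Set ℂ := {z | ∃ m : ℕ, f.eval^[m + 1] z = z}

/-- the bad set to avoid: points orbit-related (in either direction) to CV ∪ Per -/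
def Eset : Set ℂ :=
  {z | ∃ s ∈ CV f ∪ Per f, ∃ n : ℕ, f.eval^[n] z = s ∨ f.eval^[n] s = z}

include hf

lemma sigmaIter_natDegree_pos (n : ℕ) : 0 < (sigmaIter f n).natDegree := by
  rw [natDegree_sigmaIter]
  exact pow_pos (by omega) n

lemma finite_fiber_iter (n : ℕ) (s : ℂ) : {z : ℂ | f.eval^[n] z = s}.Finite := by
  have h0 : 0 < (sigmaIter f n).natDegree := sigmaIter_natDegree_pos f hf n
  have hne : sigmaIter f n - C s ≠ 0 := by
    intro h
    have : sigmaIter f n = C s := by linear_combination (norm := ring_nf) h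
    rw [this, natDegree_C] at h0; omega
  have : {z : ℂ | f.eval^[n] z = s} ⊆ {z | (sigmaIter f n - C s).IsRoot z} := by
    intro z hz
    simp only [Set.mem_setOf_eq, IsRoot, eval_sub, eval_C, eval_sigmaIter, sub_eq_zero]
    exact hz
  exact (Polynomial.finite_setOf_isRoot hne).subset this

lemma countable_Eset : (Eset f).Countable := by
  have hCV : (CV f).Countable := by
    apply Set.Countable.image
    apply Set.Finite.countable
    apply Polynomial.finite_setOf_isRoot
    intro h
    have := Polynomial.natDegree_eq_zero_of_derivative_eq_zero h
    omega
  have hPer : (Per f).Countable := by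
    have : Per f ⊆ ⋃ m : ℕ, {z : ℂ | (sigmaIter f (m+1) - X).IsRoot z} := by
      intro z hz
      obtain ⟨m, hm⟩ := hz
      refine Set.mem_iUnion.2 ⟨m, ?_⟩
      simp only [Set.mem_setOf_eq, IsRoot, eval_sub, eval_X, eval_sigmaIter, sub_eq_zero]
      exact hm
    refine Set.Countable.mono this ?_
    apply Set.countable_iUnion
    intro m
    apply Set.Finite.countable
    apply Polynomial.finite_setOf_isRoot
    intro h
    have h2 : sigmaIter f (m+1) = X := by linear_combination (norm := ring_nf) h
    have := natDegree_sigmaIter f (m+1)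
    rw [h2, natDegree_X] at this
    have : 1 < f.natDegree ^ (m+1) := by
      calc 1 < f.natDegree := hf
      _ ≤ f.natDegree ^ (m+1) := le_self_pow (by omega) (by omega)
    omega
  have hS : (CV f ∪ Per f).Countable := hCV.union hPer
  have : Eset f ⊆ ⋃ s ∈ CV f ∪ Per f,
      ((⋃ n : ℕ, {z : ℂ | f.eval^[n] z = s}) ∪ Set.range (fun n : ℕ => f.eval^[n] s)) := by
    rintro z ⟨s, hs, n, h | h⟩
    · exact Set.mem_biUnion hs (Or.inl (Set.mem_iUnion.2 ⟨n, h⟩))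
    · exact Set.mem_biUnion hs (Or.inr ⟨n, h⟩)
  refine Set.Countable.mono this ?_
  refine Set.Countable.biUnion hS fun s _ => ?_
  exact ((Set.countable_iUnion fun n => (finite_fiber_iter f hf n s).countable).union
    (Set.countable_range _))

lemma exists_preimage (w : ℂ) : ∃ r : ℂ, f.eval r = w := by
  have h0 : 0 < (f - C w).degree := by
    have : (f - C w).natDegree = f.natDegree := natDegree_sub_C
    have hne : (f - C w).natDegree ≠ 0 := by omega
    exact natDegree_pos_iff_degree_pos.mp (by omega)
  obtain ⟨z, hz⟩ := Complex.exists_root h0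
  exact ⟨z, by simpa [IsRoot, sub_eq_zero] using hz⟩

lemma two_preimages {w : ℂ} (hw : w ∉ CV f) :
    ∃ r s : ℂ, r ≠ s ∧ f.eval r = w ∧ f.eval s = w := by
  classical
  set p : ℂ[X] := f - C w with hp
  have hpne : p ≠ 0 := by
    intro h
    have : p.natDegree = f.natDegree := natDegree_sub_C
    rw [h, natDegree_zero] at this; omega
  have hdeg : p.natDegree = f.natDegree := natDegree_sub_C
  have hcard : p.roots.card = p.natDegree :=
    Polynomial.splits_iff_card_roots.mp (IsAlgClosed.splits p)
  obtain ⟨r, hr⟩ := exists_preimage f hf w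
  have hrroot : r ∈ p.roots := by
    rw [mem_roots hpne]
    simp [hp, IsRoot, hr, sub_eq_zero]
  by_cases h2 : ∃ s ∈ p.roots, s ≠ r
  · obtain ⟨s, hs, hsr⟩ := h2
    have : f.eval s = w := by
      have := (mem_roots hpne).mp hs
      simpa [hp, IsRoot, sub_eq_zero] using this
    exact ⟨r, s, hsr.symm, hr, this⟩
  · exfalso
    push_neg at h2
    have hall : ∀ s ∈ p.roots, s = r := h2
    have hcount : p.roots.count r = p.roots.card := Multiset.count_eq_card.mpr (fun a ha => (hall a ha).symm)
    have hmult : 2 ≤ rootMultiplicity r p := by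
      rw [← Polynomial.count_roots, hcount, hcard, hdeg]; omega
    have hdvd : (X - C r) ^ 2 ∣ p :=
      dvd_trans (pow_dvd_pow _ hmult) (Polynomial.pow_rootMultiplicity_dvd p r)
    obtain ⟨q, hq⟩ := hdvd
    apply hw
    refine ⟨r, ?_, hr⟩
    have hder : f.derivative = p.derivative := by simp [hp]
    rw [Set.mem_setOf_eq, IsRoot, hder, hq]
    simp [derivative_mul, derivative_pow]

end Dyn

lemma mem_Eset_of_S {z : ℂ} (hz : z ∈ CV f ∪ Per f) : z ∈ Eset f :=
  ⟨z, hz, 0, Or.inl rfl⟩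

lemma step_avoid {w r : ℂ} (hw : w ∉ Eset f) (hr : f.eval r = w) : r ∉ Eset f := by
  rintro ⟨s, hs, n, hcase | hcase⟩
  · cases n with
    | zero =>
      apply hw
      refine ⟨s, hs, 1, Or.inr ?_⟩
      simp only [Function.iterate_one]
      rw [← hcase]; exact hr
    | succ m =>
      apply hw
      refine ⟨s, hs, m, Or.inl ?_⟩
      rw [← hcase, Function.iterate_succ_apply, hr]
  · apply hw
    exact ⟨s, hs, n + 1, Or.inr (by rw [Function.iterate_succ_apply', hcase, hr])⟩

lemma exists_beta0 (hf : 1 < f.natDegree) : ∃ z : ℂ, z ∉ Eset f := by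
  by_contra h
  push_neg at h
  have : (Set.univ : Set ℂ).Countable := by
    refine Set.Countable.mono ?_ (countable_Eset f hf)
    intro z _; exact h z
  rw [Set.countable_univ_iff] at this
  have hu : Uncountable ℂ := Complex.ofReal_injective.uncountable
  exact (not_countable_iff.mpr hu) this

/-- a backward orbit avoiding the bad set -/
def beta (hf : 1 < f.natDegree) : ℕ → ℂ
  | 0 => Classical.choose (exists_beta0 f hf)
  | k + 1 => Classical.choose (exists_preimage f hf (beta hf k))

variable (hf : 1 < f.natDegree)

lemma beta_succ (k : ℕ) : f.eval (beta f hf (k + 1)) = beta f hf k :=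
  Classical.choose_spec (exists_preimage f hf (beta f hf k))

lemma beta_avoid (k : ℕ) : beta f hf k ∉ Eset f := by
  induction k with
  | zero => exact Classical.choose_spec (exists_beta0 f hf)
  | succ m ih => exact step_avoid f ih (beta_succ f hf m)

lemma iter_beta {m k : ℕ} (h : m ≤ k) : f.eval^[m] (beta f hf k) = beta f hf (k - m) := by
  induction m with
  | zero => simp
  | succ j ih =>
    have hj : j ≤ k := by omega
    have h1 : k - j = (k - (j+1)) + 1 := by omega
    rw [Function.iterate_succ_apply', ih hj, h1, beta_succ]

lemma beta_not_per (k : ℕ) : beta f hf k ∉ Per f := fun h =>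
  beta_avoid f hf k (mem_Eset_of_S f (Or.inr h))

lemma beta_injOn {k l : ℕ} (hkl : k < l) : beta f hf k ≠ beta f hf l := by
  intro h
  apply beta_not_per f hf l
  refine ⟨l - k - 1, ?_⟩
  have h2 : l - k - 1 + 1 = l - k := by omega
  rw [h2, iter_beta f hf (by omega : l - k ≤ l), ← h]
  congr 1; omega

lemma exists_mu (n : ℕ) : ∃ μ : ℂ, f.eval μ = beta f hf n ∧ μ ≠ beta f hf (n + 1) ∧
    ∀ l, l ≤ n → μ ≠ beta f hf l := by
  have hcv : beta f hf n ∉ CV f := fun h =>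
    beta_avoid f hf n (mem_Eset_of_S f (Or.inl h))
  obtain ⟨r, s, hrs, hr, hs⟩ := two_preimages f hf hcv
  have key : ∀ μ : ℂ, f.eval μ = beta f hf n → ∀ l, l ≤ n → μ ≠ beta f hf l := by
    intro μ hμ l hl he
    cases l with
    | zero =>
      apply beta_not_per f hf 0
      refine ⟨n, ?_⟩
      rw [Function.iterate_succ_apply, ← he, hμ, iter_beta f hf (le_refl n)]
      simp [he]
    | succ j =>
      subst he
      rw [beta_succ] at hμ
      exact beta_injOn f hf (show j < n by omega) hμ
  by_cases hrb : r = beta f hf (n + 1)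
  · refine ⟨s, hs, ?_, key s hs⟩
    intro h; exact hrs (by rw [hrb, ← h])
  · exact ⟨r, hr, hrb, key r hr⟩


section Rep

variable (μ : ℂ)

/-- weights -/
def wt (i : ℕ) : ℂ := f.eval^[i] μ

lemma wt_zero : wt f μ 0 = μ := rfl

lemma wt_succ (i : ℕ) : wt f μ (i + 1) = f.eval (wt f μ i) := Function.iterate_succ_apply' _ _ _

def Xop : Module.End ℂ (ℕ →₀ ℂ) := Finsupp.lsum ℂ (fun i => Finsupp.lsingle (i + 1))

def Hop : Module.End ℂ (ℕ →₀ ℂ) := Finsupp.lsum ℂ (fun i => wt f μ i • Finsupp.lsingle i)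

def Yop : Module.End ℂ (ℕ →₀ ℂ) := Finsupp.lsum ℂ (fun i => match i with
  | 0 => 0
  | j + 1 => (wt f μ (j + 1) - μ) • Finsupp.lsingle j)

@[simp] lemma Xop_single (i : ℕ) (c : ℂ) :
    Xop (Finsupp.single i c) = Finsupp.single (i + 1) c := by
  simp [Xop]

@[simp] lemma Hop_single (i : ℕ) (c : ℂ) :
    Hop f μ (Finsupp.single i c) = wt f μ i • Finsupp.single i c := by
  simp [Hop]

@[simp] lemma Yop_single_zero (c : ℂ) : Yop f μ (Finsupp.single 0 c) = 0 := by
  simp [Yop]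

@[simp] lemma Yop_single_succ (j : ℕ) (c : ℂ) :
    Yop f μ (Finsupp.single (j + 1) c) = (wt f μ (j + 1) - μ) • Finsupp.single j c := by
  simp [Yop]

lemma Hop_pow_single (n i : ℕ) (c : ℂ) :
    (Hop f μ ^ n) (Finsupp.single i c) = wt f μ i ^ n • Finsupp.single i c := by
  induction n with
  | zero => simp
  | succ m ih =>
    rw [pow_succ', Module.End.mul_apply, ih, map_smul, Hop_single, smul_smul, ← pow_succ]

lemma aeval_Hop_single (p : ℂ[X]) (i : ℕ) (c : ℂ) :
    (aeval (Hop f μ) p) (Finsupp.single i c) = p.eval (wt f μ i) • Finsupp.single i c := by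
  induction p using Polynomial.induction_on' with
  | add p q hp hq => simp [map_add, LinearMap.add_apply, hp, hq, add_smul]
  | monomial n a =>
    rw [aeval_monomial, Module.End.mul_apply, Hop_pow_single, map_smul,
      Module.algebraMap_end_apply, smul_smul, eval_monomial, mul_comm]

lemma rel1 : Hop f μ * Xop = Xop * (aeval (Hop f μ) f) := by
  apply Finsupp.lhom_ext
  intro i c
  rw [Module.End.mul_apply, Module.End.mul_apply, Xop_single, Hop_single, aeval_Hop_single,
    map_smul, Xop_single, wt_succ]

lemma rel2 : Yop f μ * Hop f μ = (aeval (Hop f μ) f) * Yop f μ := by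
  apply Finsupp.lhom_ext
  intro i c
  rw [Module.End.mul_apply, Module.End.mul_apply, Hop_single, map_smul]
  cases i with
  | zero => simp
  | succ j =>
    rw [Yop_single_succ, map_smul, aeval_Hop_single, smul_smul, smul_smul,
      ← wt_succ f μ j]
    rw [mul_comm]

lemma rel3 : Yop f μ * Xop = Xop * Yop f μ + (aeval (Hop f μ) f - Hop f μ) := by
  apply Finsupp.lhom_ext
  intro i c
  rw [Module.End.mul_apply, LinearMap.add_apply, Module.End.mul_apply, LinearMap.sub_apply,
    Xop_single, aeval_Hop_single, Hop_single]
  cases i with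
  | zero =>
    rw [Yop_single_succ, Yop_single_zero, map_zero, wt_succ, wt_zero]
    simp [sub_smul]
  | succ j =>
    rw [Yop_single_succ, Yop_single_succ, map_smul, Xop_single,
      wt_succ f μ (j + 1)]
    simp only [sub_smul, smul_smul]
    module

/-- the representation of GHA f on ℕ →₀ ℂ attached to the parameter μ -/
def rho : GHA f →ₐ[ℂ] Module.End ℂ (ℕ →₀ ℂ) :=
  RingQuot.liftAlgHom ℂ ⟨FreeAlgebra.lift ℂ (fun i : Fin 3 => ![Xop, Yop f μ, Hop f μ] i), by
    intro a b r
    have hX : (FreeAlgebra.lift ℂ (fun i : Fin 3 => ![Xop, Yop f μ, Hop f μ] i))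
        (FreeAlgebra.ι ℂ 0) = Xop := by simp [FreeAlgebra.lift_ι_apply]
    have hY : (FreeAlgebra.lift ℂ (fun i : Fin 3 => ![Xop, Yop f μ, Hop f μ] i))
        (FreeAlgebra.ι ℂ 1) = Yop f μ := by simp [FreeAlgebra.lift_ι_apply]
    have hH : (FreeAlgebra.lift ℂ (fun i : Fin 3 => ![Xop, Yop f μ, Hop f μ] i))
        (FreeAlgebra.ι ℂ 2) = Hop f μ := by simp [FreeAlgebra.lift_ι_apply]
    induction r with
    | hx => rw [map_mul, map_mul, hX, hH, ← Polynomial.aeval_algHom_apply, hH, rel1]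
    | yh => rw [map_mul, map_mul, hY, hH, ← Polynomial.aeval_algHom_apply, hH, rel2]
    | yx =>
      rw [map_mul, map_add, map_mul, map_sub, hX, hY, hH,
        ← Polynomial.aeval_algHom_apply, hH, rel3]⟩

lemma rho_ghaX : rho f μ (ghaX f) = Xop := by
  rw [ghaX, rho, RingQuot.liftAlgHom_mkAlgHom_apply]
  simp [FreeAlgebra.lift_ι_apply]

lemma rho_ghaY : rho f μ (ghaY f) = Yop f μ := by
  rw [ghaY, rho, RingQuot.liftAlgHom_mkAlgHom_apply]
  simp [FreeAlgebra.lift_ι_apply]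

lemma rho_ghaH : rho f μ (ghaH f) = Hop f μ := by
  rw [ghaH, rho, RingQuot.liftAlgHom_mkAlgHom_apply]
  simp [FreeAlgebra.lift_ι_apply]

end Rep


section Chain

variable (hf : 1 < f.natDegree)

/-- the generators of the ascending chain of left ideals -/
def gel (k : ℕ) : GHA f := (ghaH f - algebraMap ℂ (GHA f) (beta f hf k)) * (ghaY f) ^ k

lemma rho_pow_y (μ : ℂ) (n k : ℕ) (hk : k ≤ n + 1) :
    (rho f μ ((ghaY f) ^ k)) (Finsupp.single (n + 1) 1) =
      (∏ l ∈ Finset.range k, (wt f μ (n + 1 - l) - μ)) • Finsupp.single (n + 1 - k) 1 := by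
  induction k with
  | zero => simp
  | succ k ih =>
    have hk' : k ≤ n + 1 := by omega
    have h1 : n + 1 - k = (n - k) + 1 := by omega
    rw [pow_succ', map_mul, Module.End.mul_apply, ih hk', map_smul, rho_ghaY, h1,
      Yop_single_succ, Finset.prod_range_succ, smul_smul, ← h1]
    congr 2
    omega

lemma rho_gel_apply (μ : ℂ) (n k : ℕ) (hk : k ≤ n + 1) :
    (rho f μ (gel f hf k)) (Finsupp.single (n + 1) 1) =
      ((∏ l ∈ Finset.range k, (wt f μ (n + 1 - l) - μ)) * (wt f μ (n + 1 - k) - beta f hf k))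
        • Finsupp.single (n + 1 - k) 1 := by
  rw [gel, map_mul, Module.End.mul_apply, rho_pow_y f μ n k hk, map_smul, map_sub,
    rho_ghaH, AlgHom.commutes, LinearMap.sub_apply, Hop_single,
    Module.algebraMap_end_apply, ← sub_smul, smul_smul]

lemma wt_mu {μ : ℂ} {n : ℕ} (hμ : f.eval μ = beta f hf n) {i : ℕ} (h1 : 1 ≤ i)
    (h2 : i ≤ n + 1) : wt f μ i = beta f hf (n + 1 - i) := by
  have h3 : i = (i - 1) + 1 := by omega
  rw [wt, h3, Function.iterate_succ_apply, hμ, iter_beta f hf (by omega : i - 1 ≤ n)]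
  congr 1
  omega

/-- the ascending chain of left ideals -/
def Lchain (n : ℕ) : Ideal (GHA f) := Ideal.span (gel f hf '' Set.Iic n)

/-- the "annihilator of a vector" left ideal -/
def Tann (μ : ℂ) (v : ℕ →₀ ℂ) : Ideal (GHA f) where
  carrier := {u | (rho f μ u) v = 0}
  add_mem' := by
    intro a b ha hb
    simp only [Set.mem_setOf_eq, map_add, LinearMap.add_apply] at *
    rw [ha, hb, add_zero]
  zero_mem' := by simp
  smul_mem' := by
    intro c u hu
    simp only [Set.mem_setOf_eq, smul_eq_mul, map_mul, Module.End.mul_apply] at *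
    rw [hu, map_zero]

include hf in
lemma gha_not_noetherian_left : ¬ IsNoetherianRing (GHA f) := by
  intro hN
  rw [isNoetherianRing_iff] at hN
  obtain ⟨n, hn⟩ := monotone_stabilizes_iff_noetherian.mpr hN
    ⟨Lchain f hf, fun a b hab =>
      Ideal.span_mono (Set.image_mono (Set.Iic_subset_Iic.mpr hab))⟩
  have hmem : gel f hf (n + 1) ∈ Lchain f hf n := by
    have := hn (n + 1) (by omega)
    change Lchain f hf n = Lchain f hf (n + 1) at this
    rw [this]
    exact Ideal.subset_span ⟨n + 1, Set.mem_Iic.mpr le_rfl, rfl⟩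
  -- now derive a contradiction using the representation at the point μ given by exists_mu
  obtain ⟨μ, hμ, hμ1, hμ2⟩ := exists_mu f hf n
  have hT : Lchain f hf n ≤ Tann f μ (Finsupp.single (n + 1) 1) := by
    rw [Lchain, Ideal.span_le]
    rintro u ⟨k, hk, rfl⟩
    have hk' : (k : ℕ) ≤ n := hk
    show (rho f μ (gel f hf k)) (Finsupp.single (n + 1) 1) = 0
    rw [rho_gel_apply f hf μ n k (by omega)]
    have : wt f μ (n + 1 - k) = beta f hf k := by
      rw [wt_mu f hf hμ (by omega : 1 ≤ n + 1 - k) (by omega : n + 1 - k ≤ n + 1)]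
      congr 1
      omega
    rw [this, sub_self, mul_zero, zero_smul]
  have h0 : (rho f μ (gel f hf (n + 1))) (Finsupp.single (n + 1) 1) ≠ 0 := by
    rw [rho_gel_apply f hf μ n (n + 1) le_rfl]
    have hsub : n + 1 - (n + 1) = 0 := by omega
    rw [hsub, wt_zero]
    refine smul_ne_zero ?_ (fun h => one_ne_zero (Finsupp.single_eq_zero.mp h))
    apply mul_ne_zero
    · rw [Finset.prod_ne_zero_iff]
      intro l hl
      rw [Finset.mem_range] at hl
      rw [wt_mu f hf hμ (by omega : 1 ≤ n + 1 - l) (by omega : n + 1 - l ≤ n + 1)]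
      have : n + 1 - (n + 1 - l) = l := by omega
      rw [this, sub_ne_zero]
      exact fun h => (hμ2 l (by omega)) h.symm
    · rw [sub_ne_zero]
      exact hμ1
  exact h0 (hT hmem)

end Chain


section Op

lemma gha_rel_hx : ghaH f * ghaX f = ghaX f * aeval (ghaH f) f := by
  have := RingQuot.mkAlgHom_rel ℂ (HeisRel.hx (f := f))
  rw [map_mul, map_mul, ← Polynomial.aeval_algHom_apply] at this
  exact this

lemma gha_rel_yh : ghaY f * ghaH f = aeval (ghaH f) f * ghaY f := by
  have := RingQuot.mkAlgHom_rel ℂ (HeisRel.yh (f := f))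
  rw [map_mul, map_mul, ← Polynomial.aeval_algHom_apply] at this
  exact this

lemma gha_rel_yx : ghaY f * ghaX f = ghaX f * ghaY f + (aeval (ghaH f) f - ghaH f) := by
  have := RingQuot.mkAlgHom_rel ℂ (HeisRel.yx (f := f))
  rw [map_mul, map_add, map_mul, map_sub, ← Polynomial.aeval_algHom_apply] at this
  exact this

lemma aeval_op {B : Type} [Ring B] [Algebra ℂ B] (c : B) (p : ℂ[X]) :
    aeval (op c) p = op (aeval c p) := by
  induction p using Polynomial.induction_on' with
  | add p q hp hq => rw [map_add, map_add, hp, hq, op_add]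
  | monomial n a =>
    rw [aeval_monomial, aeval_monomial, MulOpposite.algebraMap_apply, ← op_pow, ← op_mul]
    rw [Algebra.commutes]

/-- the anti-automorphism of GHA f exchanging x and y, as a map to the opposite algebra -/
def Phi : GHA f →ₐ[ℂ] (GHA f)ᵐᵒᵖ :=
  RingQuot.liftAlgHom ℂ ⟨FreeAlgebra.lift ℂ
      (fun i : Fin 3 => ![op (ghaY f), op (ghaX f), op (ghaH f)] i), by
    intro a b r
    have hX : (FreeAlgebra.lift ℂ (fun i : Fin 3 => ![op (ghaY f), op (ghaX f), op (ghaH f)] i))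
        (FreeAlgebra.ι ℂ 0) = op (ghaY f) := by simp [FreeAlgebra.lift_ι_apply]
    have hY : (FreeAlgebra.lift ℂ (fun i : Fin 3 => ![op (ghaY f), op (ghaX f), op (ghaH f)] i))
        (FreeAlgebra.ι ℂ 1) = op (ghaX f) := by simp [FreeAlgebra.lift_ι_apply]
    have hH : (FreeAlgebra.lift ℂ (fun i : Fin 3 => ![op (ghaY f), op (ghaX f), op (ghaH f)] i))
        (FreeAlgebra.ι ℂ 2) = op (ghaH f) := by simp [FreeAlgebra.lift_ι_apply]
    induction r with
    | hx =>
      rw [map_mul, map_mul, hX, hH, ← Polynomial.aeval_algHom_apply, hH, aeval_op,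
        ← op_mul, ← op_mul, gha_rel_yh]
    | yh =>
      rw [map_mul, map_mul, hY, hH, ← Polynomial.aeval_algHom_apply, hH, aeval_op,
        ← op_mul, ← op_mul, gha_rel_hx]
    | yx =>
      rw [map_mul, map_add, map_mul, map_sub, hX, hY, hH,
        ← Polynomial.aeval_algHom_apply, hH, aeval_op, ← op_mul, ← op_mul, ← op_sub, ← op_add,
        gha_rel_yx]⟩

lemma Phi_surjective : Function.Surjective (Phi f) := by
  intro a
  obtain ⟨w, hw⟩ := RingQuot.mkAlgHom_surjective ℂ (HeisRel f) (unop a)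
  have ha : a = op (RingQuot.mkAlgHom ℂ (HeisRel f) w) := by rw [hw, op_unop]
  rw [ha]
  clear ha hw a
  induction w using FreeAlgebra.induction with
  | grade0 r =>
    exact ⟨algebraMap ℂ _ r, by
      rw [AlgHom.commutes, MulOpposite.algebraMap_apply, AlgHom.commutes]⟩
  | grade1 i =>
    fin_cases i
    · exact ⟨ghaY f, by rw [ghaY, Phi, RingQuot.liftAlgHom_mkAlgHom_apply]
                        simp [FreeAlgebra.lift_ι_apply, ghaX]⟩
    · exact ⟨ghaX f, by rw [ghaX, Phi, RingQuot.liftAlgHom_mkAlgHom_apply]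
                        simp [FreeAlgebra.lift_ι_apply, ghaY]⟩
    · exact ⟨ghaH f, by rw [ghaH, Phi, RingQuot.liftAlgHom_mkAlgHom_apply]
                        simp [FreeAlgebra.lift_ι_apply, ghaH]⟩
  | mul u v hu hv =>
    obtain ⟨cu, hcu⟩ := hu
    obtain ⟨cv, hcv⟩ := hv
    exact ⟨cv * cu, by rw [map_mul, hcu, hcv, map_mul, op_mul]⟩
  | add u v hu hv =>
    obtain ⟨cu, hcu⟩ := hu
    obtain ⟨cv, hcv⟩ := hv
    exact ⟨cu + cv, by rw [map_add, hcu, hcv, map_add, op_add]⟩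

/-- unop ∘ unop as a ring hom -/
def unopUnop : ((GHA f)ᵐᵒᵖ)ᵐᵒᵖ →+* GHA f where
  toFun a := unop (unop a)
  map_one' := rfl
  map_mul' a b := rfl
  map_zero' := rfl
  map_add' a b := rfl

lemma gha_not_noetherian_right (hf : 1 < f.natDegree) : ¬ IsNoetherianRing (GHA f)ᵐᵒᵖ := by
  intro hN
  apply gha_not_noetherian_left f hf
  have hsurj : Function.Surjective
      ((unopUnop f).comp (RingHom.op (Phi f).toRingHom)) := by
    intro c
    obtain ⟨u, hu⟩ := Phi_surjective f (op c)
    refine ⟨op u, ?_⟩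
    show unop (unop ((RingHom.op (Phi f).toRingHom) (op u))) = c
    have : (RingHom.op (Phi f).toRingHom) (op u) = op ((Phi f) u) := rfl
    rw [this, hu]
    rfl
  exact isNoetherianRing_of_surjective _ _ _ hsurj

end Op


end GhaNN

/-- If deg f > 1 then H(f) is neither left nor right Noetherian. -/
theorem gha_not_noetherian (f : ℂ[X]) (hf : 1 < f.natDegree) :
    ¬ IsNoetherianRing (GHA f) ∧ ¬ IsNoetherianRing (GHA f)ᵐᵒᵖ := by
  exact ⟨GhaNN.gha_not_noetherian_left f hf, GhaNN.gha_not_noetherian_right f hf⟩
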